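/- With G, p, χ_a, χ_b, σ_a, σ_b, N_b, ω as before (ω - σ_b ω = Res_{N_b} χ_a), let N_a = ker χ_a. Then the subgroup N_a ∩ ker ω is normal in G and has index p³ in G. -/

import Mathlib

/-!  Framework: mod-p group cohomology in low degrees via explicit
inhomogeneous cochains, cup products, restriction, corestriction
(transfer), and triple Massey products. -/

namespace MasseyGalois

variable {p : ℕ}

/-- A (degree-one) character: an additive character `G → ℤ/p`,
i.e. a 1-cocycle; these are exactly the elements of `H¹(G, ℤ/p)`. -/
def IsChar (p : ℕ) {G : Type} [Group G] (χ : G → ZMod p) : Prop :=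
  ∀ σ τ : G, χ (σ * τ) = χ σ + χ τ

theorem IsChar.one {G : Type} [Group G] {χ : G → ZMod p} (h : IsChar p χ) :
    χ 1 = 0 := by
  have h1 := h 1 1
  rw [mul_one] at h1
  linear_combination -h1

theorem IsChar.inv {G : Type} [Group G] {χ : G → ZMod p} (h : IsChar p χ)
    (σ : G) : χ σ⁻¹ = -χ σ := by
  have h1 := h σ σ⁻¹
  rw [mul_inv_cancel, h.one] at h1
  linear_combination -h1

/-- The kernel of a character, as a subgroup. -/
def charKer {G : Type} [Group G] (χ : G → ZMod p) (h : IsChar p χ) :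
    Subgroup G where
  carrier := {σ | χ σ = 0}
  one_mem' := h.one
  mul_mem' := by
    intro a b ha hb
    simp only [Set.mem_setOf_eq] at *
    rw [h a b, ha, hb, add_zero]
  inv_mem' := by
    intro a ha
    simp only [Set.mem_setOf_eq] at *
    rw [h.inv, ha, neg_zero]

theorem mem_charKer_iff {G : Type} [Group G] {χ : G → ZMod p}
    (h : IsChar p χ) {σ : G} : σ ∈ charKer χ h ↔ χ σ = 0 := Iff.rfl

theorem charKer_normal {G : Type} [Group G] (χ : G → ZMod p)
    (h : IsChar p χ) : (charKer χ h).Normal := by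
  constructor
  intro n hn g
  show χ (g * n * g⁻¹) = 0
  rw [h, h, h.inv]
  have hn' : χ n = 0 := hn
  rw [hn']
  ring

theorem charKer_comm_mem {G : Type} [Group G] {χ : G → ZMod p}
    (h : IsChar p χ) (σ τ : G) : σ * τ * σ⁻¹ * τ⁻¹ ∈ charKer χ h := by
  show χ (σ * τ * σ⁻¹ * τ⁻¹) = 0
  rw [h, h, h, h.inv, h.inv]
  ring

/-- Coboundary of a 1-cochain (inhomogeneous cochains, trivial action). -/
def d1 {G : Type} [Group G] (φ : G → ZMod p) : G → G → ZMod p :=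
  fun σ τ => φ σ + φ τ - φ (σ * τ)

/-- Coboundary of a 2-cochain. -/
def d2 {G : Type} [Group G] (f : G → G → ZMod p) : G → G → G → ZMod p :=
  fun σ τ ρ => f τ ρ - f (σ * τ) ρ + f σ (τ * ρ) - f σ τ

/-- Cup product of two 1-cochains. -/
def cup {G : Type} (χ χ' : G → ZMod p) : G → G → ZMod p :=
  fun σ τ => χ σ * χ' τ

def IsCocycle2 {G : Type} [Group G] (f : G → G → ZMod p) : Prop :=
  ∀ σ τ ρ, d2 f σ τ ρ = 0

def IsCoboundary2 {G : Type} [Group G] (f : G → G → ZMod p) : Prop :=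
  ∃ φ : G → ZMod p, f = d1 φ

/-- Two 2-cochains represent the same class in `H²`. -/
def Cohomologous {G : Type} [Group G] (f g : G → G → ZMod p) : Prop :=
  IsCoboundary2 (f - g)

/-- `z` is the value `χ₁ ∪ φ₂₃ + φ₁₂ ∪ χ₃` of a defining system for the
triple Massey product `⟨χ₁, χ₂, χ₃⟩`. -/
def MasseyRep {G : Type} [Group G] (χ₁ χ₂ χ₃ : G → ZMod p)
    (z : G → G → ZMod p) : Prop :=
  ∃ φ₁₂ φ₂₃ : G → ZMod p,
    d1 φ₁₂ = cup χ₁ χ₂ ∧ d1 φ₂₃ = cup χ₂ χ₃ ∧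
    z = cup χ₁ φ₂₃ + cup φ₁₂ χ₃

/-- The set of all 2-cocycles whose class lies in the triple Massey
product `⟨χ₁, χ₂, χ₃⟩ ⊆ H²`; as this set is closed under coboundaries,
equalities/membership statements about it faithfully encode the
corresponding statements about the subset of `H²`. -/
def MasseySet {G : Type} [Group G] (χ₁ χ₂ χ₃ : G → ZMod p) :
    Set (G → G → ZMod p) :=
  {z | ∃ z', MasseyRep χ₁ χ₂ χ₃ z' ∧ Cohomologous z z'}

/-- The Massey product is essential: non-empty but not containing `0`. -/
def MasseyEssential {G : Type} [Group G] (χ₁ χ₂ χ₃ : G → ZMod p) : Prop :=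
  (MasseySet χ₁ χ₂ χ₃).Nonempty ∧
    (0 : G → G → ZMod p) ∉ MasseySet χ₁ χ₂ χ₃

/-- `ℤ/p`-linear independence of a pair of characters. -/
def LinIndepPair {G : Type} (χ χ' : G → ZMod p) : Prop :=
  ∀ a b : ZMod p, (∀ g : G, a * χ g + b * χ' g = 0) → a = 0 ∧ b = 0

/-- Restriction of a 1-cochain to a subgroup. -/
def res1 {G : Type} [Group G] (U : Subgroup G) (χ : G → ZMod p) :
    ↥U → ZMod p := fun u => χ ↑u

/-- Restriction of a 2-cochain to a subgroup. -/
def res2 {G : Type} [Group G] (U : Subgroup G) (f : G → G → ZMod p) :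
    ↥U → ↥U → ZMod p := fun u v => f ↑u ↑v

/-- Corestriction (transfer) on `H¹` from a finite-index subgroup. -/
noncomputable def cor1 {G : Type} [Group G] (K : Subgroup G)
    (φ : ↥K → ZMod p) : G → ZMod p := by
  classical
  exact if h : K.FiniteIndex ∧ IsChar p φ then
    haveI := h.1
    let φ' : ↥K →* Multiplicative (ZMod p) :=
      { toFun := fun k => Multiplicative.ofAdd (φ k)
        map_one' := by
          show Multiplicative.ofAdd (φ 1) = 1
          rw [h.2.one]; rfl
        map_mul' := fun a b => by
          show Multiplicative.ofAdd (φ (a * b)) = _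
          rw [h.2 a b]; rfl }
    fun g => Multiplicative.toAdd (MonoidHom.transfer φ' g)
  else 0

/-- Exactness of `H¹(ker χ) →(Cor) H¹(H) →(χ ∪ ·) H²(H)` at `H¹(H)`. -/
def ExactAtH1 {H : Type} [Group H] (p : ℕ) (χ : H → ZMod p)
    (hχ : IsChar p χ) : Prop :=
  ∀ lam : H → ZMod p, IsChar p lam →
    (IsCoboundary2 (cup χ lam) ↔
      ∃ μ : ↥(charKer χ hχ) → ZMod p, IsChar p μ ∧
        lam = cor1 (charKer χ hχ) μ)

/-- Exactness of `H¹(H) →(χ ∪ ·) H²(H) →(Res) H²(ker χ)` at `H²(H)`. -/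
def ExactAtH2 {H : Type} [Group H] (p : ℕ) (χ : H → ZMod p)
    (hχ : IsChar p χ) : Prop :=
  ∀ f : H → H → ZMod p, IsCocycle2 f →
    (IsCoboundary2 (res2 (charKer χ hχ) f) ↔
      ∃ lam : H → ZMod p, IsChar p lam ∧ Cohomologous f (cup χ lam))

end MasseyGalois

section Helpers
open MasseyGalois

variable {p : ℕ}

theorem char_pow' {G : Type} [Group G] {χ : G → ZMod p} (h : MasseyGalois.IsChar p χ)
    (g : G) (n : ℕ) : χ (g ^ n) = n * χ g := by
  induction n with
  | zero => simpa using h.one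
  | succ n ih => rw [pow_succ, h, ih]; push_cast; ring

theorem index_charKer' {H : Type} [Group H] (hp : p.Prime) {χ : H → ZMod p}
    (hχ : MasseyGalois.IsChar p χ) (g : H) (hg : χ g = 1) :
    (MasseyGalois.charKer χ hχ).index = p := by
  haveI : NeZero p := ⟨hp.pos.ne'⟩
  let φ : H →* Multiplicative (ZMod p) :=
    { toFun := fun x => Multiplicative.ofAdd (χ x)
      map_one' := by show Multiplicative.ofAdd (χ 1) = 1; rw [hχ.one]; rfl
      map_mul' := fun a b => by show Multiplicative.ofAdd (χ (a*b)) = _; rw [hχ a b]; rfl }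
  have hker : MasseyGalois.charKer χ hχ = φ.ker := by
    ext x
    show χ x = 0 ↔ _
    simp [MonoidHom.mem_ker, φ]
  have hsurj : Function.Surjective φ := by
    intro y
    refine ⟨g ^ (Multiplicative.toAdd y).val, ?_⟩
    show Multiplicative.ofAdd (χ (g ^ (Multiplicative.toAdd y).val)) = y
    rw [char_pow' hχ, hg, mul_one]
    simp [ZMod.natCast_val, ZMod.cast_id]
  rw [hker, Subgroup.index_ker, MonoidHom.range_eq_top.mpr hsurj]
  rw [show Nat.card ↥(⊤ : Subgroup (Multiplicative (ZMod p))) = Nat.card (Multiplicative (ZMod p)) from Nat.card_congr Subgroup.topEquiv.toEquiv]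
  exact Nat.card_zmod p

end Helpers

open MasseyGalois in
/-- Proposition (b), (c): with `ω - σ_b ω = Res_{N_b} χ_a`, the subgroup
`N_a ∩ ker ω` is normal in `G` of index `p³`. -/
theorem ker_omega_normal_of_index_p_cubed {p : ℕ} (hp : p.Prime) {G : Type}
    [Group G] (χa χb : G → ZMod p) (ha : IsChar p χa) (hb : IsChar p χb)
    (hind : LinIndepPair χa χb) (σa σb : G)
    (haa : χa σa = 1) (hab : χa σb = 0) (hba : χb σa = 0) (hbb : χb σb = 1)
    (ω : ↥(charKer χb hb) → ZMod p) (hω : IsChar p ω)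
    (hωeq : ∀ h : ↥(charKer χb hb),
      ω h - ω ⟨σb * ↑h * σb⁻¹, (charKer_normal χb hb).conj_mem ↑h h.2 σb⟩ =
        χa ↑h) :
    (charKer χa ha ⊓
        Subgroup.map (charKer χb hb).subtype (charKer ω hω)).Normal ∧
    (charKer χa ha ⊓
        Subgroup.map (charKer χb hb).subtype (charKer ω hω)).index = p ^ 3 := by
  classical
  haveI : NeZero p := ⟨hp.pos.ne'⟩
  set Kom := Subgroup.map (charKer χb hb).subtype (charKer ω hω) with hKomdef
  set ω' : G → ZMod p := fun g => if h : χb g = 0 then ω ⟨g, h⟩ else 0 with hω'def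
  have hω'1 : ∀ (g : G) (h : χb g = 0), ω' g = ω ⟨g, h⟩ := fun g h => dif_pos h
  have hconj_a : ∀ g x : G, χa (g * x * g⁻¹) = χa x := by
    intro g x; rw [ha, ha, ha.inv]; ring
  have hconj_b : ∀ g x : G, χb (g * x * g⁻¹) = χb x := by
    intro g x; rw [hb, hb, hb.inv]; ring
  have hω'add : ∀ x y : G, χb x = 0 → χb y = 0 → ω' (x * y) = ω' x + ω' y := by
    intro x y hx hy
    have hxy : χb (x * y) = 0 := by rw [hb, hx, hy, add_zero]
    rw [hω'1 _ hxy, hω'1 _ hx, hω'1 _ hy]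
    exact hω ⟨x, hx⟩ ⟨y, hy⟩
  have hω'inv : ∀ x : G, χb x = 0 → ω' x⁻¹ = -ω' x := by
    intro x hx
    have hxi : χb x⁻¹ = 0 := by rw [hb.inv, hx, neg_zero]
    rw [hω'1 _ hxi, hω'1 _ hx]
    exact hω.inv ⟨x, hx⟩
  have hω'conj : ∀ x : G, χb x = 0 → ω' (σb * x * σb⁻¹) = ω' x - χa x := by
    intro x hx
    have hcx : χb (σb * x * σb⁻¹) = 0 := by rw [hconj_b, hx]
    rw [hω'1 _ hcx, hω'1 _ hx]
    have h1 := hωeq ⟨x, hx⟩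
    have h2 : ω ⟨σb * x * σb⁻¹, hcx⟩ =
        ω ⟨σb * ↑(⟨x, hx⟩ : ↥(charKer χb hb)) * σb⁻¹,
          (charKer_normal χb hb).conj_mem ↑(⟨x, hx⟩ : ↥(charKer χb hb)) (⟨x, hx⟩ : ↥(charKer χb hb)).2 σb⟩ := rfl
    rw [h2]
    linear_combination -h1
  have hω'pow : ∀ (n : ℕ) (x : G), χb x = 0 → ω' (x ^ n) = n * ω' x := by
    intro n x hx
    induction n with
    | zero =>
      have h0 : χb (1 : G) = 0 := hb.one
      simp only [pow_zero, Nat.cast_zero, zero_mul]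
      rw [hω'1 _ h0]
      exact hω.one
    | succ n ih =>
      have hxn : χb (x ^ n) = 0 := by rw [char_pow' hb, hx, mul_zero]
      rw [pow_succ, hω'add _ _ hxn hx, ih]
      push_cast; ring
  have hω'conjpow : ∀ (n : ℕ) (x : G), χb x = 0 →
      ω' (σb ^ n * x * (σb ^ n)⁻¹) = ω' x - n * χa x := by
    intro n x hx
    induction n with
    | zero => simp
    | succ n ih =>
      have hmem : χb (σb ^ n * x * (σb ^ n)⁻¹) = 0 := by rw [hconj_b, hx]
      have hre : σb ^ (n + 1) * x * (σb ^ (n + 1))⁻¹ =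
          σb * (σb ^ n * x * (σb ^ n)⁻¹) * σb⁻¹ := by
        rw [pow_succ' σb n]; group
      rw [hre, hω'conj _ hmem, ih, hconj_a]
      push_cast; ring
  have hKom : ∀ g : G, g ∈ Kom ↔ χb g = 0 ∧ ω' g = 0 := by
    intro g
    constructor
    · rintro ⟨y, hy, rfl⟩
      refine ⟨y.2, ?_⟩
      rw [show (charKer χb hb).subtype y = ↑y from rfl, hω'1 _ y.2]
      exact hy
    · rintro ⟨h1, h2⟩
      exact ⟨⟨g, h1⟩, by rw [hω'1 _ h1] at h2; exact h2, rfl⟩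
  constructor
  · -- normality
    constructor
    intro k hk g
    obtain ⟨hka, hkm⟩ := hk
    obtain ⟨hkb, hkω⟩ := (hKom k).mp hkm
    have hka' : χa k = 0 := hka
    set n := (χb g).val with hn
    have hncast : (n : ZMod p) = χb g := by
      rw [hn, ZMod.natCast_val, ZMod.cast_id]
    set h := (σb ^ n)⁻¹ * g with hh
    have hhb : χb h = 0 := by
      rw [hh, hb, hb.inv, char_pow' hb, hbb, hncast]; ring
    have hre : g * k * g⁻¹ = σb ^ n * (h * k * h⁻¹) * (σb ^ n)⁻¹ := by
      rw [hh]; group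
    have hinb : χb (h * k * h⁻¹) = 0 := by rw [hconj_b, hkb]
    have hina : χa (h * k * h⁻¹) = 0 := by rw [hconj_a, hka']
    have hinω : ω' (h * k * h⁻¹) = 0 := by
      have hhk : χb (h * k) = 0 := by rw [hb, hhb, hkb, add_zero]
      have hhi : χb h⁻¹ = 0 := by rw [hb.inv, hhb, neg_zero]
      rw [hω'add _ _ hhk hhi, hω'add _ _ hhb hkb, hω'inv _ hhb, hkω]
      ring
    refine ⟨?_, (hKom _).mpr ⟨?_, ?_⟩⟩
    · show χa (g * k * g⁻¹) = 0
      rw [hconj_a, hka']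
    · rw [hre, hconj_b, hinb]
    · rw [hre, hω'conjpow _ _ hinb, hinω, hina]; ring
  · -- index p^3
    set K := charKer χa ha ⊓ Kom with hKdef
    have hNbind : (charKer χb hb).index = p := index_charKer' hp hb σb hbb
    -- the commutator element v with ω'(v) = 1
    set v := σa * (σb * σa * σb⁻¹)⁻¹ with hv
    have hvb : χb v = 0 := by
      rw [hv, hb, hb.inv, hb, hb, hb.inv, hba]; ring
    have hvω : ω' v = 1 := by
      have hc : χb (σb * σa * σb⁻¹) = 0 := by rw [hconj_b, hba]
      have hci : χb (σb * σa * σb⁻¹)⁻¹ = 0 := by rw [hb.inv, hc, neg_zero]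
      rw [hv, hω'add _ _ hba hci, hω'inv _ hc, hω'conj _ hba, haa]
      ring
    have hva : χa v = 0 := by
      rw [hv, ha, ha.inv, ha, ha, ha.inv, haa, hab]; ring
    -- second step: index of ker ω in Nb
    have hE1 : Kom.subgroupOf (charKer χb hb) = charKer ω hω :=
      Subgroup.comap_map_eq_self_of_injective (charKer χb hb).subtype_injective _
    have hωind : (charKer ω hω).index = p := by
      refine index_charKer' hp hω ⟨v, hvb⟩ ?_
      rw [← hω'1 _ hvb]; exact hvω
    -- third step: the restriction of χa to Kom
    set χK : ↥Kom → ZMod p := fun u => χa ↑u with hχK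
    have hχKchar : IsChar p χK := fun u w => ha ↑u ↑w
    have hEK : K.subgroupOf Kom = charKer χK hχKchar := by
      ext x
      rw [Subgroup.mem_subgroupOf]
      exact ⟨fun hmem => hmem.1, fun hmem => ⟨hmem, x.2⟩⟩
    -- the witness u ∈ Kom with χa u = 1
    set m := (-(ω' σa)).val with hm
    have hmcast : (m : ZMod p) = -(ω' σa) := by
      rw [hm, ZMod.natCast_val, ZMod.cast_id]
    set u := σa * v ^ m with hu
    have hub : χb u = 0 := by
      rw [hu, hb, char_pow' hb, hba, hvb]; ring
    have huω : ω' u = 0 := by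
      have hvm : χb (v ^ m) = 0 := by rw [char_pow' hb, hvb, mul_zero]
      rw [hu, hω'add _ _ hba hvm, hω'pow _ _ hvb, hvω, hmcast]; ring
    have hua : χa u = 1 := by
      rw [hu, ha, char_pow' ha, hva, haa]; ring
    have humem : u ∈ Kom := (hKom u).mpr ⟨hub, huω⟩
    have hχKind : (charKer χK hχKchar).index = p :=
      index_charKer' hp hχKchar ⟨u, humem⟩ hua
    -- combine via multiplicativity of the index
    have r1 : K.relIndex Kom * Kom.index = K.index :=
      Subgroup.relIndex_mul_index inf_le_right
    have r2 : Kom.relIndex (charKer χb hb) * (charKer χb hb).index = Kom.index :=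
      Subgroup.relIndex_mul_index (Subgroup.map_subtype_le _)
    have e2 : Kom.relIndex (charKer χb hb) = p := by
      rw [show Kom.relIndex (charKer χb hb) = (Kom.subgroupOf (charKer χb hb)).index from rfl, hE1]
      exact hωind
    have e3 : K.relIndex Kom = p := by
      rw [show K.relIndex Kom = (K.subgroupOf Kom).index from rfl, hEK]
      exact hχKind
    rw [← r1, ← r2, e2, e3, hNbind]
    ring
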